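/- Let R be a commutative ring and X_1, …, X_n elements of R. Let S(t) = Π_{i=1}^{n} (1 + X_i·t) in the polynomial ring R[t], let S′(t) denote its formal derivative, and in R[[t]] let Q(t) = Σ_{k≥0} (−1)^k · p_k · t^k where p_k = Σ_{i=1}^n X_i^k (so p_0 = n·1). Then, as formal power series, t·S′(t) = S(t)·(n·1 − Q(t)). -/

import Mathlib

open Polynomial PowerSeries

lemma aux_inv {R : Type*} [CommRing R] (a : R) :
    ((1 + Polynomial.C a * Polynomial.X : Polynomial R) : PowerSeries R) *
      PowerSeries.mk (fun k => (-a) ^ k) = 1 := by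
  ext k
  cases k with
  | zero => simp
  | succ m =>
      push_cast
      rw [add_mul, one_mul, mul_assoc, map_add, PowerSeries.coeff_mk]
      rw [PowerSeries.coeff_C_mul, PowerSeries.coeff_succ_X_mul, PowerSeries.coeff_mk]
      simp [pow_succ, mul_comm, mul_left_comm]

lemma aux_inv' {R : Type*} [CommRing R] (a : R) :
    ((1 : PowerSeries R) + PowerSeries.C a * PowerSeries.X) *
      PowerSeries.mk (fun k => (-a) ^ k) = 1 := by
  have h := aux_inv a
  push_cast at h
  exact h

lemma aux_fac {R : Type*} [CommRing R] (a : R) :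
    ((1 : PowerSeries R) + PowerSeries.C a * PowerSeries.X) *
      (1 - PowerSeries.mk (fun k => (-a) ^ k)) =
      PowerSeries.X * PowerSeries.C a := by
  have h := aux_inv a
  push_cast at h
  rw [mul_sub, h, mul_one]
  ring

lemma poly_derivative_finset_prod {R ι : Type*} [CommRing R] [DecidableEq ι] (s : Finset ι)
    (f : ι → Polynomial R) :
    Polynomial.derivative (∏ i ∈ s, f i) =
      ∑ i ∈ s, (∏ j ∈ s.erase i, f j) * Polynomial.derivative (f i) := by
  induction s using Finset.induction_on with
  | empty => simp
  | @insert a s ha ih =>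
      rw [Finset.prod_insert ha, derivative_mul, ih, Finset.sum_insert ha,
        Finset.erase_insert ha, Finset.mul_sum]
      have key : ∀ i ∈ s, f a * ((∏ j ∈ s.erase i, f j) * Polynomial.derivative (f i)) =
          (∏ j ∈ (insert a s).erase i, f j) * Polynomial.derivative (f i) := by
        intro i hi
        rw [Finset.erase_insert_of_ne (fun h => (h ▸ ha) hi),
          Finset.prod_insert (fun h => ha (Finset.mem_of_mem_erase h))]
        ring
      rw [Finset.sum_congr rfl key, mul_comm (Polynomial.derivative (f a))]

/-- For `S(t) = ∏ᵢ (1 + Xᵢ t)` in `R[t]` and the power-sum generating series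
`Q(t) = ∑ₖ (-1)^k pₖ t^k` with `pₖ = ∑ᵢ Xᵢ^k`, we have `t·S'(t) = S(t)·(n·1 − Q(t))`
as formal power series. -/
theorem t_mul_deriv_eq {R : Type*} [CommRing R] {n : ℕ} (X : Fin n → R)
    (S : Polynomial R) (hS : S = ∏ i, (1 + Polynomial.C (X i) * Polynomial.X))
    (Q : PowerSeries R) (hQ : Q = PowerSeries.mk (fun k => (-1 : R) ^ k * ∑ i, X i ^ k)) :
    PowerSeries.X * (↑(Polynomial.derivative S) : PowerSeries R) =
      (↑S : PowerSeries R) * ((n : PowerSeries R) - Q) := by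
  subst hS hQ
  have hQsum : PowerSeries.mk (fun k => (-1 : R) ^ k * ∑ i, X i ^ k)
      = ∑ i, PowerSeries.mk (fun k => (-X i) ^ k) := by
    ext k
    simp only [PowerSeries.coeff_mk, map_sum, Finset.mul_sum]
    exact Finset.sum_congr rfl fun i _ => (neg_pow (X i) k).symm
  have hn : ((n : ℕ) : PowerSeries R) = ∑ _i : Fin n, 1 := by simp
  have coe_sum : ∀ (g : Fin n → Polynomial R),
      ((∑ i, g i : Polynomial R) : PowerSeries R) = ∑ i, ((g i : Polynomial R) : PowerSeries R) :=
    fun g => by simp only [← Polynomial.coeToPowerSeries.ringHom_apply, map_sum]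
  rw [hQsum, hn, ← Finset.sum_sub_distrib, Finset.mul_sum, poly_derivative_finset_prod,
    coe_sum, Finset.mul_sum]
  refine Finset.sum_congr rfl fun i _ => ?_
  rw [← Finset.mul_prod_erase Finset.univ _ (Finset.mem_univ i)]
  push_cast
  rw [Polynomial.derivative_add, Polynomial.derivative_one, Polynomial.derivative_mul,
    Polynomial.derivative_X, Polynomial.derivative_C]
  push_cast
  linear_combination
    ((∏ j ∈ Finset.univ.erase i, (1 + Polynomial.C (X j) * Polynomial.X) : Polynomial R) :
      PowerSeries R) * aux_inv' (X i)
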